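/- Let x_1,...,x_n be real numbers with empirical mean μ̂ and empirical standard deviation σ̂ (population version, i.e. σ̂² = (1/n)Σ(x_i−μ̂)²) with σ̂ > 0. For any subset S ⊆ {1,...,n} of size m, |Σ_{i∈S} (x_i − μ̂)/σ̂| ≤ √(m(n−m)). -/

import Mathlib

/-- Standardization bound: for any m-element subset S of indices,
`|∑_{i∈S} (x i − μ)/σ| ≤ √(m(n−m))`. -/
theorem standardization_bound (n : ℕ) (x : Fin n → ℝ) (μ σ : ℝ)
    (hμ : μ = (∑ i, x i) / n)
    (hσ : σ = Real.sqrt ((∑ i, (x i - μ) ^ 2) / n))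
    (hσpos : 0 < σ)
    (S : Finset (Fin n)) :
    |∑ i ∈ S, (x i - μ) / σ| ≤
      Real.sqrt ((S.card : ℝ) * ((n : ℝ) - (S.card : ℝ))) := by
  have hn : 0 < n := by
    rcases Nat.eq_zero_or_pos n with h | h
    · subst h; simp at hσ; simp [hσ] at hσpos
    · exact h
  have hnR : (0:ℝ) < n := by exact_mod_cast hn
  set z : Fin n → ℝ := fun i => (x i - μ) / σ with hz
  -- sum of z is 0
  have hsum0 : ∑ i, z i = 0 := by
    have : ∑ i, (x i - μ) = 0 := by
      rw [Finset.sum_sub_distrib, Finset.sum_const, hμ]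
      simp [Finset.card_univ]
      field_simp
      ring
    simp only [hz, div_eq_mul_inv, ← Finset.sum_mul, this, zero_mul]
  -- sum of z^2 is n
  have hσsq : σ ^ 2 = (∑ i, (x i - μ) ^ 2) / n := by
    rw [hσ, Real.sq_sqrt]
    positivity
  have hsq : ∑ i, z i ^ 2 = n := by
    have hσne : σ ≠ 0 := ne_of_gt hσpos
    have hA : ∑ i, (x i - μ) ^ 2 = n * σ ^ 2 := by
      rw [hσsq]; field_simp
    have : ∑ i, z i ^ 2 = (∑ i, (x i - μ) ^ 2) / σ ^ 2 := by
      simp [hz, div_pow, Finset.sum_div]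
    rw [this, hA]
    field_simp
  set T := ∑ i ∈ S, z i with hT
  set m : ℝ := (S.card : ℝ) with hm
  have hmnonneg : (0:ℝ) ≤ m := by positivity
  have hnm : (0:ℝ) ≤ (n:ℝ) - m := by
    have : S.card ≤ n := by
      simpa using Finset.card_le_card (Finset.subset_univ S)
    have := (Nat.cast_le (α := ℝ)).2 this
    linarith
  -- Cauchy-Schwarz on S and Sᶜ
  have cs1 : T ^ 2 ≤ m * ∑ i ∈ S, z i ^ 2 := by
    simpa [hm] using sq_sum_le_card_mul_sum_sq (s := S) (f := z)
  have hcompl : ∑ i ∈ Sᶜ, z i = -T := by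
    have := Finset.sum_add_sum_compl S z
    rw [hsum0] at this
    linarith
  have hcomplcard : ((Sᶜ : Finset (Fin n)).card : ℝ) = (n:ℝ) - m := by
    have : S.card ≤ n := by
      simpa using Finset.card_le_card (Finset.subset_univ S)
    rw [Finset.card_compl, Fintype.card_fin, Nat.cast_sub this]
  have cs2 : T ^ 2 ≤ ((n:ℝ) - m) * ∑ i ∈ Sᶜ, z i ^ 2 := by
    have := sq_sum_le_card_mul_sum_sq (s := Sᶜ) (f := z)
    rw [hcompl, hcomplcard] at this
    simpa using this
  have hsplit : (∑ i ∈ S, z i ^ 2) + (∑ i ∈ Sᶜ, z i ^ 2) = n := by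
    rw [Finset.sum_add_sum_compl S (fun i => z i ^ 2), hsq]
  have key : T ^ 2 ≤ m * ((n:ℝ) - m) := by
    have h1 : ((n:ℝ) - m) * T ^ 2 ≤ ((n:ℝ) - m) * (m * ∑ i ∈ S, z i ^ 2) :=
      mul_le_mul_of_nonneg_left cs1 hnm
    have h2 : m * T ^ 2 ≤ m * (((n:ℝ) - m) * ∑ i ∈ Sᶜ, z i ^ 2) :=
      mul_le_mul_of_nonneg_left cs2 hmnonneg
    nlinarith [sq_nonneg T]
  have : |T| ≤ Real.sqrt (m * ((n:ℝ) - m)) := by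
    have := Real.sqrt_le_sqrt key
    rwa [Real.sqrt_sq_eq_abs] at this
  simpa [hT, hz, hm] using this
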